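/- If X is lumpable with respect to g (in the Kemeny-Snell sense that Σ_{j∈g^{-1}(l)} P_{ij} = Q_{g(i)l} for all i and l), then the P-lifting equals the original transition matrix: P̂ = P, and consequently the KL divergence rate D̄(X || X'^P) = Σ_{i,j} μ_i P_{ij} log(P_{ij}/P̂_{ij}) equals zero. -/

import Mathlib

open Finset

/-- If `X` is lumpable w.r.t. `g` (Kemeny–Snell: `∑_{j∈g⁻¹(l)} P_{ij} = Q_{g(i) l}`
for all `i, l`), then the `P`-lifting equals the original transition matrix, `P̂ = P`,
and consequently the KL divergence rate `∑_{i,j} μ_i P_{ij} log(P_{ij}/P̂_{ij})` is zero. -/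
theorem P_lifting_of_lumpable_eq {𝒳 𝒴 : Type*} [Fintype 𝒳] [Fintype 𝒴]
    [DecidableEq 𝒴] [Nonempty 𝒳]
    (P : 𝒳 → 𝒳 → ℝ) (μ : 𝒳 → ℝ) (g : 𝒳 → 𝒴)
    (hg : Function.Surjective g)
    (hPnn : ∀ i j, 0 ≤ P i j) (hProw : ∀ i, ∑ j, P i j = 1)
    (hμpos : ∀ i, 0 < μ i) (hμsum : ∑ i, μ i = 1)
    (hμinv : ∀ j, ∑ i, μ i * P i j = μ j)
    (ν : 𝒴 → ℝ)
    (hν : ∀ k, ν k = ∑ i ∈ univ.filter (fun i => g i = k), μ i)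
    (Q : 𝒴 → 𝒴 → ℝ)
    (hQ : ∀ k l, Q k l =
      (∑ i ∈ univ.filter (fun i => g i = k),
        ∑ j ∈ univ.filter (fun j => g j = l), μ i * P i j) / ν k)
    (Phat : 𝒳 → 𝒳 → ℝ)
    -- the P-lifting
    (hPhat : ∀ i j, Phat i j =
      if 0 < ∑ k ∈ univ.filter (fun k => g k = g j), P i k then
        P i j / (∑ k ∈ univ.filter (fun k => g k = g j), P i k) * Q (g i) (g j)
      else
        Q (g i) (g j) / (univ.filter (fun k => g k = g j)).card)
    -- lumpability hypothesis
    (hlump : ∀ (i : 𝒳) (l : 𝒴), ∑ j ∈ univ.filter (fun j => g j = l), P i j = Q (g i) l) :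
    (∀ i j, Phat i j = P i j) ∧
    (∑ i, ∑ j, μ i * P i j * Real.log (P i j / Phat i j)) = 0 := by
  have key : ∀ i j, Phat i j = P i j := by
    intro i j
    rw [hPhat i j]
    set S := ∑ k ∈ univ.filter (fun k => g k = g j), P i k with hS
    have hSQ : S = Q (g i) (g j) := hlump i (g j)
    by_cases h : 0 < S
    · rw [if_pos h]
      field_simp [hSQ.symm]
      rw [hSQ]
    · rw [if_neg h]
      have hS0 : S = 0 := le_antisymm (not_lt.mp h)
        (Finset.sum_nonneg fun k _ => hPnn i k)
      have hPij : P i j = 0 := by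
        have := Finset.sum_eq_zero_iff_of_nonneg (fun k _ => hPnn i k) |>.mp hS0 j
          (by simp)
        exact this
      rw [← hSQ, hS0, hPij, zero_div]
  refine ⟨key, ?_⟩
  apply Finset.sum_eq_zero; intro i _
  apply Finset.sum_eq_zero; intro j _
  rw [key i j]
  by_cases h : P i j = 0
  · simp [h]
  · rw [div_self h, Real.log_one, mul_zero]
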